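/- Assume char K = 2. Let ε be a plane external to the Klein quadric H₅ such that ε ∩ π₅(ε) is a point q (a 1-dimensional subspace). Then for every line G with G ≤ ε one has: G ≤ π₅(G) if and only if q ≤ G (i.e. G belongs to the pencil L[q,ε]); and G ∩ π₅(G) = 0 if and only if q is not contained in G. -/

import Mathlib

/-- The Klein quadratic form on `K^6`. -/
def kleinQ {K : Type*} [Field K] (x : Fin 6 → K) : K :=
  x 0 * x 1 + x 2 * x 3 + x 4 * x 5

/-- The polar bilinear form `B(x,y) = Q(x+y) - Q(x) - Q(y)`. -/
def kleinB {K : Type*} [Field K] (x y : Fin 6 → K) : K :=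
  kleinQ (x + y) - kleinQ x - kleinQ y

/-- The polar subspace `π₅(S)` of a subspace `S`. -/
def kleinPolar {K : Type*} [Field K] (S : Submodule K (Fin 6 → K)) :
    Submodule K (Fin 6 → K) where
  carrier := {y | ∀ s ∈ S, kleinB s y = 0}
  add_mem' := by
    intro a b ha hb s hs
    have h1 := ha s hs
    have h2 := hb s hs
    simp only [kleinB, kleinQ, Pi.add_apply] at *
    linear_combination h1 + h2
  zero_mem' := by
    intro s hs
    simp [kleinB, kleinQ]
  smul_mem' := by
    intro c a ha s hs
    have h1 := ha s hs
    simp only [kleinB, kleinQ, Pi.add_apply, Pi.smul_apply, smul_eq_mul] at *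
    linear_combination c * h1

/-- `τ` is a tangent hyperplane of the Klein quadric. -/
def IsTangentHyperplane {K : Type*} [Field K] (τ : Submodule K (Fin 6 → K)) : Prop :=
  ∃ x : Fin 6 → K, x ≠ 0 ∧ kleinQ x = 0 ∧ τ = kleinPolar (Submodule.span K {x})

/-- A subspace is external to the Klein quadric. -/
def IsExternal {K : Type*} [Field K] (S : Submodule K (Fin 6 → K)) : Prop :=
  ∀ s ∈ S, s ≠ 0 → kleinQ s ≠ 0

/-- A `0`-secant of the Klein quadric: an external line. -/
def IsSecant {K : Type*} [Field K] (G : Submodule K (Fin 6 → K)) : Prop :=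
  Module.finrank K G = 2 ∧ IsExternal G

/-- The pencil of lines with vertex `v` and carrier plane `κ`. -/
def pencil {K : Type*} [Field K] (v κ : Submodule K (Fin 6 → K)) :
    Set (Submodule K (Fin 6 → K)) :=
  {X | Module.finrank K X = 2 ∧ v ≤ X ∧ X ≤ κ}

/-- An hfd line set: a set of `0`-secants such that every tangent hyperplane
contains exactly one member. -/
def IsHfd {K : Type*} [Field K] (H : Set (Submodule K (Fin 6 → K))) : Prop :=
  (∀ G ∈ H, IsSecant G) ∧
    ∀ τ : Submodule K (Fin 6 → K), IsTangentHyperplane τ → ∃! G, G ∈ H ∧ G ≤ τ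

/-- A pencilled hfd line set: every member lies in a pencil entirely contained in `H`. -/
def IsPencilledHfd {K : Type*} [Field K] (H : Set (Submodule K (Fin 6 → K))) : Prop :=
  IsHfd H ∧
    ∀ G ∈ H, ∃ v κ : Submodule K (Fin 6 → K), Module.finrank K v = 1 ∧
      Module.finrank K κ = 3 ∧ v ≤ κ ∧ pencil v κ ⊆ H ∧ G ∈ pencil v κ

/-- `v` is a vertex of the pencilled hfd line set `H`. -/
def IsVertex {K : Type*} [Field K] (H : Set (Submodule K (Fin 6 → K)))
    (v : Submodule K (Fin 6 → K)) : Prop :=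
  Module.finrank K v = 1 ∧ ∃ κ : Submodule K (Fin 6 → K),
    Module.finrank K κ = 3 ∧ v ≤ κ ∧ pencil v κ ⊆ H

/-- `κ` is a carrier plane of the pencilled hfd line set `H`. -/
def IsCarrier {K : Type*} [Field K] (H : Set (Submodule K (Fin 6 → K)))
    (κ : Submodule K (Fin 6 → K)) : Prop :=
  Module.finrank K κ = 3 ∧ ∃ v : Submodule K (Fin 6 → K),
    Module.finrank K v = 1 ∧ v ≤ κ ∧ pencil v κ ⊆ H


section Aux

variable {K : Type*} [Field K]

lemma kleinB_symm (x y : Fin 6 → K) : kleinB x y = kleinB y x := by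
  simp only [kleinB, kleinQ, Pi.add_apply]; ring

lemma kleinB_self [CharP K 2] (x : Fin 6 → K) : kleinB x x = 0 := by
  have h2 : (2 : K) = 0 := by exact_mod_cast CharP.cast_eq_zero K 2
  simp only [kleinB, kleinQ, Pi.add_apply]
  linear_combination (x 0 * x 1 + x 2 * x 3 + x 4 * x 5) * h2

lemma kleinB_expand_right (x y z : Fin 6 → K) (a b : K) :
    kleinB x (a • y + b • z) = a * kleinB x y + b * kleinB x z := by
  simp only [kleinB, kleinQ, Pi.add_apply, Pi.smul_apply, smul_eq_mul]; ring

lemma kleinB_expand_left (x y z : Fin 6 → K) (a b : K) :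
    kleinB (a • y + b • z) x = a * kleinB y x + b * kleinB z x := by
  simp only [kleinB, kleinQ, Pi.add_apply, Pi.smul_apply, smul_eq_mul]; ring

lemma kleinB_add_add (a b c d : Fin 6 → K) :
    kleinB (a + b) (c + d) = kleinB a c + kleinB a d + kleinB b c + kleinB b d := by
  simp only [kleinB, kleinQ, Pi.add_apply]; ring

lemma mem_kleinPolar {S : Submodule K (Fin 6 → K)} {y : Fin 6 → K} :
    y ∈ kleinPolar S ↔ ∀ s ∈ S, kleinB s y = 0 := Iff.rfl

lemma kleinPolar_antitone {S T : Submodule K (Fin 6 → K)} (h : S ≤ T) :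
    kleinPolar T ≤ kleinPolar S := fun y hy s hs => hy s (h hs)

lemma key_lemma [CharP K 2] (G : Submodule K (Fin 6 → K))
    (hG : Module.finrank K G = 2) (x : Fin 6 → K) (hx : x ∈ G) (hx0 : x ≠ 0)
    (h : ∀ g ∈ G, kleinB g x = 0) : G ≤ kleinPolar G := by
  let b := Module.finBasisOfFinrankEq K G hG
  set a0 : Fin 6 → K := (b 0 : Fin 6 → K) with ha0def
  set a1 : Fin 6 → K := (b 1 : Fin 6 → K) with ha1def
  have ha0 : a0 ∈ G := (b 0).2
  have ha1 : a1 ∈ G := (b 1).2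
  have hrep : ∀ g ∈ G, ∃ α β : K, g = α • a0 + β • a1 := by
    intro g hg
    refine ⟨b.repr ⟨g, hg⟩ 0, b.repr ⟨g, hg⟩ 1, ?_⟩
    have h1 := b.sum_repr ⟨g, hg⟩
    rw [Fin.sum_univ_two] at h1
    have h2 : ((((b.repr ⟨g, hg⟩) 0 • b 0 + (b.repr ⟨g, hg⟩) 1 • b 1 : G)) : Fin 6 → K) = g :=
      congrArg Subtype.val h1
    refine h2.symm.trans ?_
    simp only [Submodule.coe_add, SetLike.val_smul]; rfl
  obtain ⟨c0, c1, hxr⟩ := hrep x hx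
  have e0 : c1 * kleinB a0 a1 = 0 := by
    have := h a0 ha0
    rw [hxr, kleinB_expand_right, kleinB_self] at this
    linear_combination this
  have e1 : c0 * kleinB a0 a1 = 0 := by
    have := h a1 ha1
    rw [hxr, kleinB_expand_right, kleinB_self, kleinB_symm a1 a0] at this
    linear_combination this
  have hβ : kleinB a0 a1 = 0 := by
    by_contra hβ
    have hc1 : c1 = 0 := by
      rcases mul_eq_zero.mp e0 with h' | h'
      · exact h'
      · exact absurd h' hβ
    have hc0 : c0 = 0 := by
      rcases mul_eq_zero.mp e1 with h' | h'
      · exact h'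
      · exact absurd h' hβ
    apply hx0
    rw [hxr, hc0, hc1]; simp
  intro g hg s hs
  obtain ⟨α1, β1, hs1⟩ := hrep s hs
  obtain ⟨α2, β2, hg2⟩ := hrep g hg
  rw [hs1, hg2, kleinB_expand_left, kleinB_expand_right, kleinB_expand_right,
    kleinB_self, kleinB_self, hβ, kleinB_symm a1 a0, hβ]
  ring

end Aux

/-- In characteristic two, let `ε` be an external plane with `ε ∩ π₅(ε)` a point `q`.
A line `G ≤ ε` satisfies `G ≤ π₅(G)` iff `q ≤ G`, and `G ∩ π₅(G) = 0` iff
`q` is not contained in `G`. -/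
theorem char_two_external_plane_pencil {K : Type*} [Field K] [CharP K 2]
    (ε : Submodule K (Fin 6 → K)) (hdim : Module.finrank K ε = 3)
    (hext : IsExternal ε)
    (q : Submodule K (Fin 6 → K)) (hq : Module.finrank K q = 1)
    (hqε : ε ⊓ kleinPolar ε = q) :
    ∀ G : Submodule K (Fin 6 → K), Module.finrank K G = 2 → G ≤ ε →
      ((G ≤ kleinPolar G ↔ q ≤ G) ∧
       ((G ⊓ kleinPolar G : Submodule K (Fin 6 → K)) = ⊥ ↔ ¬ q ≤ G)) := by
  intro G hGdim hGε
  have hqsub : q ≤ ε ⊓ kleinPolar ε := le_of_eq hqε.symm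
  have hqpol : q ≤ kleinPolar ε := hqsub.trans inf_le_right
  have hqε' : q ≤ ε := hqsub.trans inf_le_left
  have hqbot : q ≠ ⊥ := by
    intro h
    rw [h] at hq
    simp at hq
  -- forward direction of part 1
  have fwd : G ≤ kleinPolar G → q ≤ G := by
    intro hGpol
    by_contra hnq
    have hinf : q ⊓ G = ⊥ := by
      by_contra hne
      have hle : q ⊓ G ≤ q := inf_le_left
      have h1 : 1 ≤ Module.finrank K (q ⊓ G : Submodule K (Fin 6 → K)) :=
        Submodule.one_le_finrank_iff.mpr hne
      have h2 : Module.finrank K (q ⊓ G : Submodule K (Fin 6 → K)) ≤ 1 := by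
        have := Submodule.finrank_mono hle
        omega
      have heq : (q ⊓ G : Submodule K (Fin 6 → K)) = q :=
        Submodule.eq_of_le_of_finrank_eq hle (by omega)
      exact hnq (heq ▸ inf_le_right)
    have hsup : Module.finrank K (q ⊔ G : Submodule K (Fin 6 → K)) = 3 := by
      have := Submodule.finrank_sup_add_finrank_inf_eq q G
      rw [hinf] at this
      simp only [finrank_bot] at this
      omega
    have hsupε : q ⊔ G = ε :=
      Submodule.eq_of_le_of_finrank_eq (sup_le hqε' hGε) (by rw [hsup, hdim])
    have hεpol : ε ≤ kleinPolar ε := by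
      intro y hy s hs
      rw [← hsupε] at hy hs
      obtain ⟨w2, hw2, g2, hg2, rfl⟩ := Submodule.mem_sup.mp hy
      obtain ⟨w1, hw1, g1, hg1, rfl⟩ := Submodule.mem_sup.mp hs
      have hw1p : w1 ∈ kleinPolar ε := hqpol hw1
      have hw2p : w2 ∈ kleinPolar ε := hqpol hw2
      rw [kleinB_add_add]
      have t1 : kleinB w1 w2 = 0 := hw2p w1 (hqε' hw1)
      have t2 : kleinB w1 g2 = 0 := by
        rw [kleinB_symm]; exact hw1p g2 (hGε hg2)
      have t3 : kleinB g1 w2 = 0 := hw2p g1 (hGε hg1)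
      have t4 : kleinB g1 g2 = 0 := hGpol hg2 g1 hg1
      rw [t1, t2, t3, t4]; ring
    have hεq : ε = q := by rw [← hqε, inf_eq_left.mpr hεpol]
    rw [hεq, hq] at hdim
    omega
  -- backward direction of part 1
  have bwd : q ≤ G → G ≤ kleinPolar G := by
    intro hqG
    obtain ⟨u, hu, hu0⟩ := Submodule.ne_bot_iff q |>.mp hqbot
    have hupol : u ∈ kleinPolar ε := hqpol hu
    exact key_lemma G hGdim u (hqG hu) hu0 (fun g hg => hupol g (hGε hg))
  refine ⟨⟨fwd, bwd⟩, ?_, ?_⟩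
  · intro hbot hqG
    have : q ≤ G ⊓ kleinPolar G :=
      le_inf hqG (hqpol.trans (kleinPolar_antitone hGε))
    rw [hbot, le_bot_iff] at this
    exact hqbot this
  · intro hnq
    by_contra hne
    obtain ⟨x, hx, hx0⟩ := Submodule.ne_bot_iff _ |>.mp hne
    have hxG : x ∈ G := hx.1
    have hxpol : x ∈ kleinPolar G := hx.2
    exact hnq (fwd (key_lemma G hGdim x hxG hx0 (fun g hg => hxpol g hg)))
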